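/- Let u(x, y) = (x - 1 - 2(x-1)y - √((x-1)² - 4y + 4y²))/(2(y - y²)), defined where (x-1)² - 4y + 4y² > 0 and y ∉ {0, 1}. Then u satisfies the inviscid Burgers equation u·∂u/∂x + ∂u/∂y = 0. -/

import Mathlib

/-- `u(x,y) = (x - 1 - 2(x-1)y - √((x-1)² - 4y + 4y²))/(2(y - y²))` satisfies the
inviscid Burgers equation `u uₓ + u_y = 0` where `(x-1)² - 4y + 4y² > 0`,
`y ∉ {0, 1}`. -/
theorem burgers_square (x y : ℝ) (h1 : 0 < (x - 1) ^ 2 - 4 * y + 4 * y ^ 2)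
    (h0 : y ≠ 0) (h1' : y ≠ 1) :
    let u : ℝ → ℝ → ℝ := fun a b =>
      (a - 1 - 2 * (a - 1) * b - Real.sqrt ((a - 1) ^ 2 - 4 * b + 4 * b ^ 2)) /
        (2 * (b - b ^ 2))
    u x y * deriv (fun a => u a y) x + deriv (fun b => u x b) y = 0 := by
  intro u
  set s : ℝ := Real.sqrt ((x - 1) ^ 2 - 4 * y + 4 * y ^ 2) with hs_def
  have hspos : 0 < s := Real.sqrt_pos.mpr h1
  have hs : s ≠ 0 := ne_of_gt hspos
  have hs2 : s ^ 2 = (x - 1) ^ 2 - 4 * y + 4 * y ^ 2 := Real.sq_sqrt h1.le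
  have hB : (y - y ^ 2) ≠ 0 := by
    intro h
    have : y * (1 - y) = 0 := by ring_nf; linarith [h]
    rcases mul_eq_zero.mp this with h' | h'
    · exact h0 h'
    · exact h1' (by linarith)
  have hDne : (x - 1) ^ 2 - 4 * y + 4 * y ^ 2 ≠ 0 := ne_of_gt h1
  -- derivative in x
  have hx : HasDerivAt (fun a => u a y)
      ((1 - 2 * y - (x - 1) / s) / (2 * (y - y ^ 2))) x := by
    have hD : HasDerivAt (fun a : ℝ => (a - 1) ^ 2 - 4 * y + 4 * y ^ 2)
        (2 * (x - 1)) x := by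
      have h := ((((hasDerivAt_id' x).sub_const 1).pow 2).sub_const
        (4 * y)).add_const (4 * y ^ 2)
      exact h.congr_deriv (by ring)
    have hsqrt : HasDerivAt (fun a : ℝ => Real.sqrt ((a - 1) ^ 2 - 4 * y + 4 * y ^ 2))
        (2 * (x - 1) / (2 * s)) x := hD.sqrt hDne
    have hnum : HasDerivAt (fun a : ℝ =>
        a - 1 - 2 * (a - 1) * y - Real.sqrt ((a - 1) ^ 2 - 4 * y + 4 * y ^ 2))
        (1 - 2 * y - 2 * (x - 1) / (2 * s)) x := by
      have h1d : HasDerivAt (fun a : ℝ => a - 1 - 2 * (a - 1) * y) (1 - 2 * y) x := by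
        have h := ((hasDerivAt_id' x).sub_const 1).sub
            ((((hasDerivAt_id' x).sub_const 1).const_mul 2).mul_const y)
        exact h.congr_deriv (by ring)
      exact h1d.sub hsqrt
    have := hnum.div_const (2 * (y - y ^ 2))
    refine this.congr_deriv ?_
    field_simp
  -- derivative in y
  have hy : HasDerivAt (fun b => u x b)
      (((-2 * (x - 1) - (-4 + 8 * y) / (2 * s)) * (2 * (y - y ^ 2)) -
        (x - 1 - 2 * (x - 1) * y - s) * (2 * (1 - 2 * y))) / (2 * (y - y ^ 2)) ^ 2) y := by
    have hD : HasDerivAt (fun b : ℝ => (x - 1) ^ 2 - 4 * b + 4 * b ^ 2)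
        (-4 + 8 * y) y := by
      have h := ((hasDerivAt_const y ((x-1)^2)).sub ((hasDerivAt_id' y).const_mul 4)).add
          (((hasDerivAt_id' y).pow 2).const_mul 4)
      exact h.congr_deriv (by ring)
    have hsqrt : HasDerivAt (fun b : ℝ => Real.sqrt ((x - 1) ^ 2 - 4 * b + 4 * b ^ 2))
        ((-4 + 8 * y) / (2 * s)) y := hD.sqrt hDne
    have hnum : HasDerivAt (fun b : ℝ =>
        x - 1 - 2 * (x - 1) * b - Real.sqrt ((x - 1) ^ 2 - 4 * b + 4 * b ^ 2))
        (-2 * (x - 1) - (-4 + 8 * y) / (2 * s)) y := by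
      have h1d : HasDerivAt (fun b : ℝ => x - 1 - 2 * (x - 1) * b) (-2 * (x - 1)) y := by
        have h := (hasDerivAt_const y (x-1)).sub ((hasDerivAt_id' y).const_mul (2 * (x-1)))
        exact h.congr_deriv (by ring)
      exact h1d.sub hsqrt
    have hden : HasDerivAt (fun b : ℝ => 2 * (b - b ^ 2)) (2 * (1 - 2 * y)) y := by
      have h := ((hasDerivAt_id' y).sub ((hasDerivAt_id' y).pow 2)).const_mul 2
      exact h.congr_deriv (by ring)
    exact hnum.div hden (by simpa using mul_ne_zero two_ne_zero hB)
  rw [hx.deriv, hy.deriv]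
  show (x - 1 - 2 * (x - 1) * y - s) / (2 * (y - y ^ 2)) *
      ((1 - 2 * y - (x - 1) / s) / (2 * (y - y ^ 2))) + _ = 0
  field_simp
  linear_combination (1 - 2 * y) * hs2
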